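/- Let A = (Σ, Q, I, F, δ) be a complete NFA. The relation P(⊏^{bw-sim}, ⊑^{fw}), which compares source states of transitions by strict backward finite-word simulation and target states by forward finite trace inclusion, is good for pruning: L(Prune(A, P(⊏^{bw-sim}, ⊑^{fw}))) = L(A). -/

import Mathlib

/-- A nondeterministic automaton (used both as NBA and NFA):
initial states, accepting states, and a transition relation. -/
structure NA (A : Type*) (Q : Type*) where
  ini : Set Q
  acc : Set Q
  trans : Set (Q × A × Q)

namespace NA

variable {A Q Q₁ Q₂ : Type*}

/-- Forward and backward completeness. -/
def Complete (M : NA A Q) : Prop :=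
  ∀ (p : Q) (a : A), (∃ q, (q, a, p) ∈ M.trans) ∧ (∃ q, (p, a, q) ∈ M.trans)

/-- Infinite run on an infinite word. -/
def InfRun (M : NA A Q) (w : ℕ → A) (π : ℕ → Q) : Prop :=
  ∀ i, (π i, w i, π (i + 1)) ∈ M.trans

/-- Fairness: accepting states are visited infinitely often. -/
def Fair (M : NA A Q) (π : ℕ → Q) : Prop :=
  ∀ n, ∃ m, n ≤ m ∧ π m ∈ M.acc

/-- The ω-language of a Büchi automaton. -/
def BuchiLang (M : NA A Q) : Set (ℕ → A) :=
  {w | ∃ π, π 0 ∈ M.ini ∧ M.InfRun w π ∧ M.Fair π}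

/-- Finite run on a finite word (only the first `w.length + 1` values of `π` matter). -/
def FinRun (M : NA A Q) (w : List A) (π : ℕ → Q) : Prop :=
  ∀ (i : ℕ) (h : i < w.length), (π i, w.get ⟨i, h⟩, π (i + 1)) ∈ M.trans

/-- The finite-word language of an NFA. -/
def FinLang (M : NA A Q) : Set (List A) :=
  {w | ∃ π, π 0 ∈ M.ini ∧ M.FinRun w π ∧ π w.length ∈ M.acc}

/-- Direct (forward) trace inclusion. -/
def DiTraceIncl (M : NA A Q₁) (N : NA A Q₂) (p : Q₁) (q : Q₂) : Prop :=
  ∀ (w : ℕ → A) (π : ℕ → Q₁), π 0 = p → M.InfRun w π →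
    ∃ ρ : ℕ → Q₂, ρ 0 = q ∧ N.InfRun w ρ ∧ ∀ i, π i ∈ M.acc → ρ i ∈ N.acc

/-- Fair trace inclusion. -/
def FairTraceIncl (M : NA A Q₁) (N : NA A Q₂) (p : Q₁) (q : Q₂) : Prop :=
  ∀ (w : ℕ → A) (π : ℕ → Q₁), π 0 = p → M.InfRun w π →
    ∃ ρ : ℕ → Q₂, ρ 0 = q ∧ N.InfRun w ρ ∧ (M.Fair π → N.Fair ρ)

/-- Backward direct trace inclusion. -/
def BwDiTraceIncl (M : NA A Q₁) (N : NA A Q₂) (p : Q₁) (q : Q₂) : Prop :=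
  ∀ (w : List A) (π : ℕ → Q₁), π 0 ∈ M.ini → M.FinRun w π → π w.length = p →
    ∃ ρ : ℕ → Q₂, ρ 0 ∈ N.ini ∧ N.FinRun w ρ ∧ ρ w.length = q ∧
      ∀ i, i ≤ w.length → π i ∈ M.acc → ρ i ∈ N.acc

/-- Forward finite trace inclusion. -/
def FwFinTraceIncl (M : NA A Q₁) (N : NA A Q₂) (p : Q₁) (q : Q₂) : Prop :=
  ∀ (w : List A) (π : ℕ → Q₁), π 0 = p → M.FinRun w π → π w.length ∈ M.acc →
    ∃ ρ : ℕ → Q₂, ρ 0 = q ∧ N.FinRun w ρ ∧ ρ w.length ∈ N.acc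

/-- Backward finite trace inclusion. -/
def BwFinTraceIncl (M : NA A Q₁) (N : NA A Q₂) (p : Q₁) (q : Q₂) : Prop :=
  ∀ (w : List A) (π : ℕ → Q₁), π 0 ∈ M.ini → M.FinRun w π → π w.length = p →
    ∃ ρ : ℕ → Q₂, ρ 0 ∈ N.ini ∧ N.FinRun w ρ ∧ ρ w.length = q

/-- Counting backward trace inclusion: the matching initial trace visits
accepting states at least as often. -/
def CountBwTraceIncl (M : NA A Q) (p q : Q) : Prop :=
  ∀ (w : List A) (π : ℕ → Q), π 0 ∈ M.ini → M.FinRun w π → π w.length = p →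
    ∃ ρ : ℕ → Q, ρ 0 ∈ M.ini ∧ M.FinRun w ρ ∧ ρ w.length = q ∧
      {i | i ≤ w.length ∧ π i ∈ M.acc}.ncard ≤ {i | i ≤ w.length ∧ ρ i ∈ M.acc}.ncard

/-- `R` is a direct forward simulation. -/
def IsDiSim (M : NA A Q₁) (N : NA A Q₂) (R : Q₁ → Q₂ → Prop) : Prop :=
  ∀ p q, R p q → (p ∈ M.acc → q ∈ N.acc) ∧
    ∀ a p', (p, a, p') ∈ M.trans → ∃ q', (q, a, q') ∈ N.trans ∧ R p' q'

/-- Direct forward simulation (the largest direct forward simulation). -/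
def DiSim (M : NA A Q₁) (N : NA A Q₂) (p : Q₁) (q : Q₂) : Prop :=
  ∃ R, IsDiSim M N R ∧ R p q

/-- `R` is a backward direct simulation (matching accepting and initial states). -/
def IsBwDiSim (M : NA A Q₁) (N : NA A Q₂) (R : Q₁ → Q₂ → Prop) : Prop :=
  ∀ p q, R p q → (p ∈ M.acc → q ∈ N.acc) ∧ (p ∈ M.ini → q ∈ N.ini) ∧
    ∀ a p', (p', a, p) ∈ M.trans → ∃ q', (q', a, q) ∈ N.trans ∧ R p' q'

/-- Backward direct simulation (the largest backward direct simulation). -/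
def BwDiSim (M : NA A Q₁) (N : NA A Q₂) (p : Q₁) (q : Q₂) : Prop :=
  ∃ R, IsBwDiSim M N R ∧ R p q

/-- `R` is a backward finite-word simulation (matching only initial states). -/
def IsBwSim (M : NA A Q₁) (N : NA A Q₂) (R : Q₁ → Q₂ → Prop) : Prop :=
  ∀ p q, R p q → (p ∈ M.ini → q ∈ N.ini) ∧
    ∀ a p', (p', a, p) ∈ M.trans → ∃ q', (q', a, q) ∈ N.trans ∧ R p' q'

/-- Backward finite-word simulation (the largest backward finite-word simulation). -/
def BwSim (M : NA A Q₁) (N : NA A Q₂) (p : Q₁) (q : Q₂) : Prop :=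
  ∃ R, IsBwSim M N R ∧ R p q

/-- Strict version of a relation: `x ⊏ y` iff `x ⊑ y` and not `y ⊑ x`. -/
def StrictRel (R : Q₁ → Q₁ → Prop) (x y : Q₁) : Prop := R x y ∧ ¬ R y x

/-- Comparing two transitions endpoint-wise; they must carry the same symbol. -/
def PairRel (Rb Rf : Q₁ → Q₂ → Prop) (t : Q₁ × A × Q₁) (t' : Q₂ × A × Q₂) : Prop :=
  t.2.1 = t'.2.1 ∧ Rb t.1 t'.1 ∧ Rf t.2.2 t'.2.2

/-- Pruned automaton: keep the transitions that are maximal w.r.t. `P`. -/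
def prune (M : NA A Q) (P : (Q × A × Q) → (Q × A × Q) → Prop) : NA A Q :=
  ⟨M.ini, M.acc, {t | t ∈ M.trans ∧ ¬ ∃ t' ∈ M.trans, P t t'}⟩

/-- Cross-pruned automaton: remove transitions of `M` subsumed by transitions of `N`. -/
def pruneAB (M : NA A Q₁) (N : NA A Q₂) (P : (Q₁ × A × Q₁) → (Q₂ × A × Q₂) → Prop) :
    NA A Q₁ :=
  ⟨M.ini, M.acc, {t | t ∈ M.trans ∧ ¬ ∃ t' ∈ N.trans, P t t'}⟩

/-- Saturated automaton: add every transition `S`-below an existing transition. -/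
def saturate (M : NA A Q) (S : (Q × A × Q) → (Q × A × Q) → Prop) : NA A Q :=
  ⟨M.ini, M.acc, {t | ∃ t' ∈ M.trans, S t t'}⟩

/-- A transition is transient if it occurs at most once in every trace. -/
def Transient (M : NA A Q) (t : Q × A × Q) : Prop :=
  ∀ (w : ℕ → A) (π : ℕ → Q), M.InfRun w π →
    ∀ i j, (π i, w i, π (i + 1)) = t → (π j, w j, π (j + 1)) = t → i = j

/-- Equivalence class of `q` w.r.t. the equivalence induced by the preorder `R`. -/
def cls (R : Q → Q → Prop) (q : Q) : Set Q := {x | R q x ∧ R x q}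

/-- Quotient automaton by the preorder `R`; equivalence classes are modeled as
the corresponding subsets of `Q`. -/
def quot (M : NA A Q) (R : Q → Q → Prop) : NA A (Set Q) :=
  ⟨{c | ∃ q ∈ M.ini, c = cls R q},
   {c | ∃ q ∈ M.acc, c = cls R q},
   {t | ∃ q₁ q₂, t.1 = cls R q₁ ∧ t.2.2 = cls R q₂ ∧ (q₁, t.2.1, q₂) ∈ M.trans}⟩

/-- `R`-jumping run: before each transition, jump to an `R`-larger state. -/
def JumpRun (M : NA A Q) (R : Q → Q → Prop) (w : ℕ → A) (π π' : ℕ → Q) : Prop :=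
  ∀ i, R (π i) (π' i) ∧ (π' i, w i, π (i + 1)) ∈ M.trans

/-- A jumping run is fair if it is accepting at infinitely many steps. -/
def JumpFair (M : NA A Q) (R : Q → Q → Prop) (π π' : ℕ → Q) : Prop :=
  ∀ n, ∃ m, n ≤ m ∧ ∃ q'' ∈ M.acc, R (π m) q'' ∧ R q'' (π' m)

end NA

section PruneAux

open NA Finset

variable {A Q : Type*}

lemma bwSim_isBwSim (M : NA A Q) : M.IsBwSim M (M.BwSim M) := by
  rintro p q ⟨R, hR, hpq⟩
  obtain ⟨h1, h2⟩ := hR p q hpq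
  refine ⟨h1, fun a p' hp' => ?_⟩
  obtain ⟨q', hq', hR'⟩ := h2 a p' hp'
  exact ⟨q', hq', R, hR, hR'⟩

lemma bwSim_refl (M : NA A Q) (p : Q) : M.BwSim M p p :=
  ⟨Eq, by rintro x y rfl; exact ⟨id, fun a p' h => ⟨p', h, rfl⟩⟩, rfl⟩

lemma bwSim_trans (M : NA A Q) {p q r : Q} (h1 : M.BwSim M p q) (h2 : M.BwSim M q r) :
    M.BwSim M p r := by
  obtain ⟨R1, hR1, hpq⟩ := h1
  obtain ⟨R2, hR2, hqr⟩ := h2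
  refine ⟨fun x z => ∃ y, R1 x y ∧ R2 y z, ?_, q, hpq, hqr⟩
  rintro x z ⟨y, hxy, hyz⟩
  obtain ⟨i1, s1⟩ := hR1 x y hxy
  obtain ⟨i2, s2⟩ := hR2 y z hyz
  refine ⟨fun hx => i2 (i1 hx), fun a x' hx' => ?_⟩
  obtain ⟨y', hy', hRy⟩ := s1 a x' hx'
  obtain ⟨z', hz', hRz⟩ := s2 a y' hy'
  exact ⟨z', hz', y', hRy, hRz⟩

noncomputable def rkBw (M : NA A Q) (p : Q) : ℕ :=
  {x | NA.StrictRel (M.BwSim M) x p}.ncard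

lemma rkBw_mono [Fintype Q] (M : NA A Q) {p q : Q} (h : M.BwSim M p q) :
    rkBw M p ≤ rkBw M q := by
  apply Set.ncard_le_ncard ?_ (Set.toFinite _)
  rintro x ⟨hxp, hpx⟩
  exact ⟨bwSim_trans M hxp h, fun hqx => hpx (bwSim_trans M h hqx)⟩

lemma rkBw_strict [Fintype Q] (M : NA A Q) {p q : Q}
    (h : NA.StrictRel (M.BwSim M) p q) : rkBw M p < rkBw M q := by
  apply Set.ncard_lt_ncard ?_ (Set.toFinite _)
  rw [Set.ssubset_iff_of_subset]
  · exact ⟨p, h, fun hc => hc.2 (bwSim_refl M p)⟩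
  · rintro x ⟨hxp, hpx⟩
    exact ⟨bwSim_trans M hxp h.1, fun hqx => hpx (bwSim_trans M h.1 hqx)⟩

lemma rkBw_lt [Fintype Q] (M : NA A Q) (p : Q) : rkBw M p < Fintype.card Q + 1 := by
  have := Set.ncard_le_ncard (Set.subset_univ {x | NA.StrictRel (M.BwSim M) x p})
    Set.finite_univ
  rw [Set.ncard_univ, Nat.card_eq_fintype_card] at this
  exact Nat.lt_succ_of_le this

lemma sum_pow_lt {B : ℕ} (c : ℕ → ℕ) (hc : ∀ k, c k < B) (m : ℕ) :
    ∑ k ∈ Finset.range m, c k * B ^ k < B ^ m := by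
  induction m with
  | zero => simp
  | succ m ih =>
    rw [Finset.sum_range_succ, pow_succ]
    calc ∑ k ∈ Finset.range m, c k * B ^ k + c m * B ^ m
        < B ^ m + c m * B ^ m := by omega
      _ = (1 + c m) * B ^ m := by ring
      _ ≤ B * B ^ m := Nat.mul_le_mul_right _ (by have := hc m; omega)
      _ = B ^ m * B := by ring

lemma lex_sum_lt {B : ℕ} {c d : ℕ → ℕ} (hc : ∀ k, c k < B) {m K : ℕ} (hK : K < m)
    (h1 : c K < d K) (h2 : ∀ k, K < k → k < m → c k ≤ d k) :
    ∑ k ∈ Finset.range m, c k * B ^ k < ∑ k ∈ Finset.range m, d k * B ^ k := by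
  have hKm : K + 1 ≤ m := hK
  rw [Finset.range_eq_Ico, ← Finset.sum_Ico_consecutive _ (Nat.zero_le (K+1)) hKm,
      ← Finset.sum_Ico_consecutive (fun k => d k * B ^ k) (Nat.zero_le (K+1)) hKm]
  have hA : ∑ k ∈ Finset.Ico 0 (K+1), c k * B ^ k < ∑ k ∈ Finset.Ico 0 (K+1), d k * B ^ k := by
    rw [← Finset.range_eq_Ico, Finset.sum_range_succ, Finset.sum_range_succ]
    have hsm : ∑ k ∈ Finset.range K, c k * B ^ k < B ^ K := sum_pow_lt c hc K
    have : c K * B ^ K + B ^ K ≤ d K * B ^ K := by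
      have h := Nat.mul_le_mul_right (B ^ K) h1
      rw [Nat.succ_mul] at h
      exact h
    omega
  have hBle : ∑ k ∈ Finset.Ico (K+1) m, c k * B ^ k ≤ ∑ k ∈ Finset.Ico (K+1) m, d k * B ^ k := by
    apply Finset.sum_le_sum
    intro k hk
    rw [Finset.mem_Ico] at hk
    exact Nat.mul_le_mul_right _ (h2 k hk.1 hk.2)
  omega

lemma bw_lift (M : NA A Q) (w : List A) :
    ∀ (i : ℕ), i ≤ w.length → ∀ (π : ℕ → Q) (q : Q), π 0 ∈ M.ini →
      (∀ j (hj : j < w.length), j < i → (π j, w.get ⟨j, hj⟩, π (j + 1)) ∈ M.trans) →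
      M.BwSim M (π i) q →
      ∃ ρ : ℕ → Q, ρ 0 ∈ M.ini ∧
        (∀ j (hj : j < w.length), j < i → (ρ j, w.get ⟨j, hj⟩, ρ (j + 1)) ∈ M.trans) ∧
        ρ i = q ∧ ∀ j ≤ i, M.BwSim M (π j) (ρ j) := by
  intro i
  induction i with
  | zero =>
    intro _ π q h0 _ hsim
    refine ⟨fun _ => q, (bwSim_isBwSim M _ _ hsim).1 h0,
      fun j hj hji => absurd hji (Nat.not_lt_zero j), rfl, fun j hj => ?_⟩
    obtain rfl := Nat.le_zero.mp hj
    exact hsim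
  | succ i ih =>
    intro hle π q h0 htr hsim
    have hi : i < w.length := hle
    obtain ⟨q', hq', hsim'⟩ :=
      (bwSim_isBwSim M _ _ hsim).2 (w.get ⟨i, hi⟩) (π i) (htr i hi (Nat.lt_succ_self i))
    obtain ⟨ρ', hρ0, hρtr, hρi, hρsim⟩ :=
      ih (Nat.le_of_succ_le hle) π q' h0
        (fun j hj hji => htr j hj (Nat.lt_succ_of_lt hji)) hsim'
    refine ⟨fun j => if j = i + 1 then q else ρ' j, ?_, ?_, ?_, ?_⟩
    · simp only [if_neg (show (0:ℕ) ≠ i+1 by omega)]; exact hρ0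
    · intro j hj hji
      rcases Nat.lt_succ_iff_lt_or_eq.mp hji with h | rfl
      · simp only [if_neg (by omega : j ≠ i+1), if_neg (by omega : j+1 ≠ i+1)]
        exact hρtr j hj h
      · simp only [if_neg (by omega : j ≠ j+1), if_pos rfl, hρi]
        exact hq'
    · simp
    · intro j hj
      by_cases hcase : j = i + 1
      · subst hcase; simp only [if_pos rfl]; exact hsim
      · simp only [if_neg hcase]
        exact hρsim j (by omega)

lemma main_aux [Fintype Q] (M : NA A Q) (w : List A) :
    ∀ (m : ℕ) (π : ℕ → Q),
      (Fintype.card Q + 1) ^ (w.length + 1)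
          - ∑ k ∈ Finset.range (w.length + 1),
              rkBw M (π (w.length - k)) * (Fintype.card Q + 1) ^ k ≤ m →
      π 0 ∈ M.ini → M.FinRun w π → π w.length ∈ M.acc →
      ∃ ρ : ℕ → Q, ρ 0 ∈ M.ini ∧
        (M.prune (NA.PairRel (NA.StrictRel (M.BwSim M)) (M.FwFinTraceIncl M))).FinRun w ρ ∧
        ρ w.length ∈ M.acc := by
  have hg : ∀ π : ℕ → Q,
      ∑ k ∈ Finset.range (w.length + 1),
          rkBw M (π (w.length - k)) * (Fintype.card Q + 1) ^ k
        < (Fintype.card Q + 1) ^ (w.length + 1) :=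
    fun π => sum_pow_lt _ (fun k => rkBw_lt M _) _
  intro m
  induction m with
  | zero =>
    intro π hm h0 hrun hacc
    exact absurd (hg π) (by omega)
  | succ m ih =>
    intro π hm h0 hrun hacc
    by_cases hpr : ∃ i, ∃ hi : i < w.length, ∃ t' ∈ M.trans,
        NA.PairRel (NA.StrictRel (M.BwSim M)) (M.FwFinTraceIncl M)
          (π i, w.get ⟨i, hi⟩, π (i+1)) t'
    · obtain ⟨i, hi, ⟨p', a, r'⟩, ht', hrel⟩ := hpr
      simp only [NA.PairRel] at hrel
      obtain ⟨hsym, hsb, hsf⟩ := hrel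
      -- backward lift of the prefix
      obtain ⟨ρpre, hρ0, hρtr, hρi, hρsim⟩ :=
        bw_lift M w i (le_of_lt hi) π p' h0 (fun j hj _ => hrun j hj) hsb.1
      -- forward part on the suffix
      have hσrun : M.FinRun (w.drop (i+1)) (fun j => π (i + 1 + j)) := by
        intro j hj
        have hlen : (w.drop (i+1)).length = w.length - (i+1) := List.length_drop
        have hj' : i + 1 + j < w.length := by omega
        have hget : (w.drop (i+1)).get ⟨j, hj⟩ = w.get ⟨i + 1 + j, hj'⟩ := by
          simp [List.get_eq_getElem, List.getElem_drop]
        rw [hget]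
        exact hrun (i+1+j) hj'
      have hσacc : (fun j => π (i + 1 + j)) (w.drop (i+1)).length ∈ M.acc := by
        have hlen : (w.drop (i+1)).length = w.length - (i+1) := List.length_drop
        have h2 : i + 1 + (w.drop (i+1)).length = w.length := by omega
        show π (i + 1 + (w.drop (i+1)).length) ∈ M.acc
        rw [h2]; exact hacc
      obtain ⟨τ, hτ0, hτrun, hτacc⟩ := hsf (w.drop (i+1)) (fun j => π (i + 1 + j)) rfl hσrun hσacc
      -- new run
      set π' : ℕ → Q := fun j => if j ≤ i then ρpre j else τ (j - (i+1)) with hπ'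
      have hπ'run : M.FinRun w π' := by
        intro j hj
        rcases lt_trichotomy j i with h | rfl | h
        · simp only [hπ', if_pos h.le, if_pos (by omega : j + 1 ≤ i)]
          exact hρtr j hj h
        · simp only [hπ', if_pos (le_refl j), if_neg (by omega : ¬ j + 1 ≤ j), hρi]
          have h0' : j + 1 - (j+1) = 0 := by omega
          rw [h0', hτ0]
          have hga : w.get ⟨j, hj⟩ = a := hsym
          rw [hga]
          exact ht'
        · simp only [hπ', if_neg (by omega : ¬ j ≤ i), if_neg (by omega : ¬ j + 1 ≤ i)]
          have hlen : (w.drop (i+1)).length = w.length - (i+1) := List.length_drop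
          have hjd : j - (i+1) < (w.drop (i+1)).length := by omega
          have hidx : i + 1 + (j - (i+1)) = j := by omega
          have hget : (w.drop (i+1)).get ⟨j - (i+1), hjd⟩ = w.get ⟨j, hj⟩ := by
            simp [List.get_eq_getElem, List.getElem_drop, hidx]
          have := hτrun (j - (i+1)) hjd
          rw [hget] at this
          have h2 : j - (i+1) + 1 = j + 1 - (i+1) := by omega
          rw [h2] at this
          exact this
      have h0' : π' 0 ∈ M.ini := by
        simp only [hπ', if_pos (Nat.zero_le i)]; exact hρ0
      have hacc' : π' w.length ∈ M.acc := by
        simp only [hπ', if_neg (by omega : ¬ w.length ≤ i)]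
        have hlen : (w.drop (i+1)).length = w.length - (i+1) := List.length_drop
        rw [← hlen]
        exact hτacc
      have hinc : ∑ k ∈ Finset.range (w.length + 1),
            rkBw M (π (w.length - k)) * (Fintype.card Q + 1) ^ k
          < ∑ k ∈ Finset.range (w.length + 1),
            rkBw M (π' (w.length - k)) * (Fintype.card Q + 1) ^ k := by
        refine lex_sum_lt (fun k => rkBw_lt M _) (K := w.length - i) (by omega) ?_ ?_
        · have h1 : w.length - (w.length - i) = i := by omega
          rw [h1]
          have hpi : π' i = p' := by
            simp only [hπ', if_pos (le_refl i)]; exact hρi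
          rw [hpi]
          exact rkBw_strict M hsb
        · intro k hk1 hk2
          have hjlt : w.length - k < i := by omega
          have : π' (w.length - k) = ρpre (w.length - k) := by
            simp only [hπ', if_pos hjlt.le]
          rw [this]
          exact rkBw_mono M (hρsim _ hjlt.le)
      have hb := hg π'
      exact ih π' (by omega) h0' hπ'run hacc'
    · push_neg at hpr
      refine ⟨π, h0, fun i hi => ⟨hrun i hi, ?_⟩, hacc⟩
      rintro ⟨t', h1, h2⟩
      exact hpr i hi t' h1 h2

end PruneAux

/-- `P(⊏ᵇʷ⁻ˢⁱᵐ, ⊑ᶠʷ)` (strict backward finite-word simulation on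
sources, forward finite trace inclusion on targets) is good for pruning on
complete NFAs. -/
theorem prune_strictBwSim_fwFinTraceIncl_gfp
    {A Q : Type*} [Fintype A] [Fintype Q] (M : NA A Q) (hM : M.Complete) :
    (M.prune (NA.PairRel (NA.StrictRel (M.BwSim M)) (M.FwFinTraceIncl M))).FinLang
      = M.FinLang := by
  ext w
  constructor
  · rintro ⟨π, h0, hrun, hacc⟩
    exact ⟨π, h0, fun i hi => (hrun i hi).1, hacc⟩
  · rintro ⟨π, h0, hrun, hacc⟩
    exact main_aux M w ((Fintype.card Q + 1) ^ (w.length + 1)) π (Nat.sub_le _ _) h0 hrun hacc
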